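/- With the setup of the 'no ghosts allowed' lemma, prove the inductive invariant: for each k ∈ {0,1,...,n}, any bijection π satisfying the heir-ordering condition and the ghost constraint must satisfy ℓ ≥ k and π(I_j) = H_j for all j ≤ k. -/
import Mathlib


/-- "No ghosts allowed" lemma. Actors are `Fin n`, with actor `i` representing the
interval `[i+1, i+2]` (1-indexed particles `I_k = [k, k+1]`). Heirs are intervals
`[a j, b j]` partitioning `[1, n+1]`, and ghosts are interior junctions of heirs.
Order conventions: interval `[x,y] ◁ j ↔ y ≤ j`, `j ◁ [x,y] ↔ j ≤ x`. -/
theorem no_ghosts_invariant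
    (n ℓ : ℕ) (hn : 1 ≤ n) (hℓ : 1 ≤ ℓ)
    (a b : Fin ℓ → ℕ)
    (hab : ∀ j, a j < b j)
    (ha1 : a ⟨0, hℓ⟩ = 1)
    (hbn : b ⟨ℓ - 1, by omega⟩ = n + 1)
    (hchain : ∀ (j : Fin ℓ) (hj : (j : ℕ) + 1 < ℓ), b j = a ⟨(j : ℕ) + 1, hj⟩)
    (isGhost : ℕ → Prop)
    (hGhost : ∀ g, isGhost g ↔ ∃ j : Fin ℓ, a j < g ∧ g < b j)
    (heirOf : {g : ℕ // isGhost g} → Fin ℓ)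
    (hheirOf : ∀ g : {g : ℕ // isGhost g}, a (heirOf g) < g.1 ∧ g.1 < b (heirOf g))
    (π : Fin n ≃ (Fin ℓ ⊕ {g : ℕ // isGhost g}))
    -- heir ordering: π⁻¹(H_1) ◁ π⁻¹(H_2) ◁ ⋯ ◁ π⁻¹(H_ℓ)
    (hHeirOrder : StrictMono fun j : Fin ℓ => π.symm (Sum.inl j))
    -- ghost constraint: exactly one of (g ◁ π⁻¹(g) ◁ π⁻¹(heir g)) or
    -- (π⁻¹(heir g) ◁ π⁻¹(g) ◁ g)
    (hGhostCon : ∀ g : {g : ℕ // isGhost g},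
      Xor'
        (g.1 ≤ (π.symm (Sum.inr g) : ℕ) + 1 ∧
          π.symm (Sum.inr g) < π.symm (Sum.inl (heirOf g)))
        (π.symm (Sum.inl (heirOf g)) < π.symm (Sum.inr g) ∧
          (π.symm (Sum.inr g) : ℕ) + 2 ≤ g.1)) :
    ∀ k : ℕ, k ≤ n → k ≤ ℓ ∧
      ∀ j : Fin ℓ, (j : ℕ) < k → (π.symm (Sum.inl j) : ℕ) = (j : ℕ) := by
  -- monotonicity of `a`
  have amono : ∀ (d : ℕ) (m : Fin ℓ) (h : (m : ℕ) + d < ℓ),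
      a m + d ≤ a ⟨(m : ℕ) + d, h⟩ := by
    intro d
    induction d with
    | zero => intro m h; simp
    | succ d ih =>
      intro m h
      have h1 : (m : ℕ) + d < ℓ := by omega
      have h2 := ih m h1
      have h3 := hab ⟨(m : ℕ) + d, h1⟩
      have h4 : b ⟨(m : ℕ) + d, h1⟩ = a ⟨(m : ℕ) + (d + 1), h⟩ :=
        hchain ⟨(m : ℕ) + d, h1⟩ h
      omega
  have amono' : ∀ m1 m2 : Fin ℓ, (m1 : ℕ) ≤ (m2 : ℕ) →
      a m1 + ((m2 : ℕ) - (m1 : ℕ)) ≤ a m2 := by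
    intro m1 m2 hle
    have hlt : (m1 : ℕ) + ((m2 : ℕ) - (m1 : ℕ)) < ℓ := by
      have := m2.isLt; omega
    have h := amono ((m2 : ℕ) - (m1 : ℕ)) m1 hlt
    have e : (⟨(m1 : ℕ) + ((m2 : ℕ) - (m1 : ℕ)), hlt⟩ : Fin ℓ) = m2 := by
      apply Fin.ext; simp; omega
    rwa [e] at h
  have aLB : ∀ m : Fin ℓ, (m : ℕ) + 1 ≤ a m := by
    intro m
    have h := amono' ⟨0, hℓ⟩ m (Nat.zero_le _)
    rw [ha1] at h
    simp at h
    omega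
  -- covering lemma: every value in [1,n] lies in some heir interval
  have cover : ∀ v, 1 ≤ v → v ≤ n → ∃ m : Fin ℓ, a m ≤ v ∧ v < b m := by
    intro v h1 h2
    have key : ∀ d (m : Fin ℓ), ℓ - (m : ℕ) ≤ d → a m ≤ v →
        ∃ m' : Fin ℓ, a m' ≤ v ∧ v < b m' := by
      intro d
      induction d with
      | zero => intro m hd _; exact absurd m.isLt (by omega)
      | succ d ih =>
        intro m hd ham
        by_cases hvb : v < b m
        · exact ⟨m, ham, hvb⟩
        · push_neg at hvb
          by_cases hm : (m : ℕ) + 1 < ℓ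
          · refine ih ⟨(m : ℕ) + 1, hm⟩ (by simp; omega) ?_
            rw [← hchain m hm]; exact hvb
          · exfalso
            have hml : (m : ℕ) = ℓ - 1 := by have := m.isLt; omega
            have e : m = (⟨ℓ - 1, by omega⟩ : Fin ℓ) := by
              apply Fin.ext; simpa using hml
            rw [e, hbn] at hvb
            omega
    refine key ℓ ⟨0, hℓ⟩ (by simp) ?_
    rw [ha1]; exact h1
  intro k
  induction k with
  | zero => intro _; exact ⟨Nat.zero_le _, fun j hj => absurd hj (by omega)⟩
  | succ k ih =>
    intro hk1
    obtain ⟨hkℓ, hpos⟩ := ih (by omega)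
    -- anything positioned before k is a heir with matching index
    have small : ∀ x : Fin ℓ ⊕ {g : ℕ // isGhost g}, (π.symm x : ℕ) < k →
        ∃ m : Fin ℓ, (m : ℕ) < k ∧ x = Sum.inl m := by
      intro x hx
      have hxl : (π.symm x : ℕ) < ℓ := by omega
      refine ⟨⟨(π.symm x : ℕ), hxl⟩, hx, ?_⟩
      have h1 := hpos ⟨(π.symm x : ℕ), hxl⟩ hx
      have h2 : π.symm (Sum.inl ⟨(π.symm x : ℕ), hxl⟩) = π.symm x := by
        apply Fin.ext; rw [h1]
      exact (π.symm.injective h2).symm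
    -- no ghost has value ≤ k+1
    have noSmallGhost : ∀ g : {g : ℕ // isGhost g}, g.1 ≤ k + 1 → False := by
      intro g hle
      have hj := hheirOf g
      have hjLB := aLB (heirOf g)
      have hjk : (heirOf g : ℕ) < k := by omega
      have hH := hpos (heirOf g) hjk
      have hposlt : (π.symm (Sum.inr g) : ℕ) < k := by
        rcases hGhostCon g with ⟨⟨h1, h2⟩, -⟩ | ⟨⟨h1, h2⟩, -⟩
        · have := Fin.lt_def.mp h2; omega
        · omega
      obtain ⟨m, hm, he⟩ := small _ hposlt
      simp at he
    -- every value in [2, k+1] is a junction a (v-1)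
    have junction : ∀ v, 2 ≤ v → v ≤ k + 1 →
        ∃ hm : v - 1 < ℓ, a ⟨v - 1, hm⟩ = v := by
      intro v
      induction v using Nat.strong_induction_on with
      | _ v ihv =>
        intro h2 hvk
        obtain ⟨m, ham, hvb⟩ := cover v (by omega) (by omega)
        have hav : a m = v := by
          by_contra hne
          have hgv : isGhost v := (hGhost v).2 ⟨m, by omega, hvb⟩
          exact noSmallGhost ⟨v, hgv⟩ (show v ≤ k + 1 by omega)
        have hm1 : 1 ≤ (m : ℕ) := by
          rcases Nat.eq_zero_or_pos (m : ℕ) with h0 | h0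
          · exfalso
            have e : m = (⟨0, hℓ⟩ : Fin ℓ) := Fin.ext (by simpa using h0)
            rw [e, ha1] at hav; omega
          · exact h0
        have hub : (m : ℕ) ≤ v - 1 := by have := aLB m; omega
        rcases eq_or_lt_of_le hub with he | hlt
        · refine ⟨by have := m.isLt; omega, ?_⟩
          have e : (⟨v - 1, by have := m.isLt; omega⟩ : Fin ℓ) = m :=
            Fin.ext (by simp; omega)
          rw [e]; exact hav
        · exfalso
          obtain ⟨hm', hav'⟩ := ihv (v - 1) (by omega) (by omega) (by omega)
          have hmono := amono' m ⟨v - 1 - 1, hm'⟩ (by simp; omega)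
          simp only [hav, hav'] at hmono
          omega
    -- main case analysis on the image of actor k
    have hkn : k < n := by omega
    rcases hx : π ⟨k, hkn⟩ with j | g
    · -- actor k maps to heir j
      have hval : π.symm (Sum.inl j) = ⟨k, hkn⟩ := by
        rw [← hx]; exact π.symm_apply_apply ⟨k, hkn⟩
      have hjk : k ≤ (j : ℕ) := by
        by_contra h
        push_neg at h
        have := hpos j h
        rw [hval] at this
        simp at this
        omega
      have hkℓ' : k < ℓ := lt_of_le_of_lt hjk j.isLt
      have hjeq : (j : ℕ) = k := by
        by_contra h
        have hlt : (⟨k, hkℓ'⟩ : Fin ℓ) < j := by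
          rw [Fin.lt_def]; simp; omega
        have h2 := hHeirOrder hlt
        simp only [] at h2
        rw [hval] at h2
        have h3 : (π.symm (Sum.inl ⟨k, hkℓ'⟩) : ℕ) < k := Fin.lt_def.mp h2
        obtain ⟨m, hm, he⟩ := small _ h3
        have : (⟨k, hkℓ'⟩ : Fin ℓ) = m := Sum.inl.inj he
        have : k = (m : ℕ) := congrArg Fin.val this
        omega
      refine ⟨by omega, ?_⟩
      intro j' hj'
      rcases Nat.lt_or_ge (j' : ℕ) k with h | h
      · exact hpos j' h
      · have hj'k : (j' : ℕ) = k := by omega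
        have e : j' = j := Fin.ext (by omega)
        rw [e, hval]
        simp
        omega
    · -- actor k maps to ghost g : contradiction
      exfalso
      have hval : π.symm (Sum.inr g) = ⟨k, hkn⟩ := by
        rw [← hx]; exact π.symm_apply_apply ⟨k, hkn⟩
      have hg2 : k + 2 ≤ g.1 := by
        by_contra h
        push_neg at h
        exact noSmallGhost g (by omega)
      rcases hGhostCon g with ⟨⟨h1, h2⟩, -⟩ | ⟨⟨h1, h2⟩, -⟩
      · rw [hval] at h1
        simp at h1
        omega
      · rw [hval] at h1
        have h3 : (π.symm (Sum.inl (heirOf g)) : ℕ) < k := Fin.lt_def.mp h1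
        obtain ⟨m, hmk, he⟩ := small _ h3
        have hjm : heirOf g = m := Sum.inl.inj he
        have hjk : (heirOf g : ℕ) < k := by rw [hjm]; exact hmk
        obtain ⟨hm', hav⟩ := junction ((heirOf g : ℕ) + 2) (by omega) (by omega)
        have hm'' : (heirOf g : ℕ) + 1 < ℓ := by omega
        have hbj : b (heirOf g) = a ⟨(heirOf g : ℕ) + 1, hm''⟩ :=
          hchain (heirOf g) hm''
        have e : (⟨(heirOf g : ℕ) + 2 - 1, hm'⟩ : Fin ℓ)
            = ⟨(heirOf g : ℕ) + 1, hm''⟩ := Fin.ext (by simp)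
        rw [e] at hav
        have := hheirOf g
        omega
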